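/- (Weak-type estimate in the testing argument) In the setting of Lemma 3.1, with {Q_j^k} the sparse family of maximal dyadic cubes from the CZ decomposition of ℳ^𝒟_α(1_Rσ₁, fσ₂), set γ_j^k = (σ₁(Q_j^k)σ₂(Q_j^k)/|Q_j^k|^{2-α/n})^q v(E(Q_j^k)) for Q_j^k ⊆ R, and let γ be the measure on Ω_R = {(k,j): Q_j^k ⊆ R} assigning mass γ_j^k to (k,j). Then the sublinear operator T f = {𝔼^{σ₂}_{Q_j^k} |f|}_{(k,j)∈Ω_R} satisfies the weak-type bound γ{Tf > λ} ≤ C [w⃗,v]_S^q σ₁(R)^{q/p₁} (λ^{-1} ∫ |f|σ₂ dx)^{q/p₂} for all λ > 0, i.e., T maps L¹(σ₂) to L^{q/p₂,∞}(γ) with norm at most C^{p₂/q}[w⃗,v]_S^{p₂} σ₁(R)^{p₂/p₁}. -/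

import Mathlib

open MeasureTheory ENNReal Set
open scoped BigOperators

noncomputable section

abbrev Rn (n : ℕ) := Fin n → ℝ

/-- An axis-parallel half-open cube with corner `c` and side length `l`. -/
def cube {n : ℕ} (c : Rn n) (l : ℝ) : Set (Rn n) :=
  {x | ∀ i, c i ≤ x i ∧ x i < c i + l}

/-- `σ(Q) = ∫_Q σ dx`. -/
def wtI {n : ℕ} (σ : Rn n → ℝ≥0∞) (Q : Set (Rn n)) : ℝ≥0∞ := ∫⁻ x in Q, σ x

/-- `𝔼^σ_Q f = σ(Q)⁻¹ ∫_Q f σ`. -/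
def avgE {n : ℕ} (σ f : Rn n → ℝ≥0∞) (Q : Set (Rn n)) : ℝ≥0∞ :=
  (wtI σ Q)⁻¹ * ∫⁻ x in Q, f x * σ x

/-- The cube `2^{-k}([0,1)ⁿ + m + (-1)^k t)` of the shifted dyadic grid. -/
def gridCube (n : ℕ) (k : ℤ) (m : Fin n → ℤ) (t : Fin n → ℝ) : Set (Rn n) :=
  {x | ∀ i, (2:ℝ) ^ (-k) * ((m i : ℝ) + (-1:ℝ) ^ k * t i) ≤ x i ∧
       x i < (2:ℝ) ^ (-k) * ((m i : ℝ) + (-1:ℝ) ^ k * t i + 1)}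

/-- The shifted dyadic grid `𝒟_t`. -/
def shiftedGrid (n : ℕ) (t : Fin n → ℝ) : Set (Set (Rn n)) :=
  {Q | ∃ (k : ℤ) (m : Fin n → ℤ), Q = gridCube n k m t}

/-- Abstract dyadic grid: cubes of dyadic side lengths, nested or disjoint,
and for each scale the cubes of that side length cover `ℝⁿ`. -/
def IsDyadicGrid {n : ℕ} (𝒟 : Set (Set (Rn n))) : Prop :=
  (∀ Q ∈ 𝒟, ∃ (c : Rn n) (k : ℤ), Q = cube c ((2:ℝ) ^ k)) ∧
  (∀ Q ∈ 𝒟, ∀ R ∈ 𝒟, Q ∩ R = Q ∨ Q ∩ R = R ∨ Q ∩ R = ∅) ∧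
  (∀ k : ℤ, (⋃ Q ∈ {Q | Q ∈ 𝒟 ∧ ∃ c : Rn n, Q = cube c ((2:ℝ) ^ k)}, Q) = univ)

/-- The multilinear fractional maximal operator `ℳ_α`. -/
def MM (n m : ℕ) (α : ℝ) (g : Fin m → Rn n → ℝ≥0∞) (x : Rn n) : ℝ≥0∞ :=
  ⨆ (c : Rn n) (l : ℝ) (_ : 0 < l) (_ : x ∈ cube c l),
    ∏ i, (volume (cube c l) ^ (-(1 - α / ((m : ℝ) * (n : ℝ)))) * ∫⁻ y in cube c l, g i y)

/-- The multilinear fractional maximal operator restricted to a grid `𝒟`. -/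
def MMD (n m : ℕ) (α : ℝ) (𝒟 : Set (Set (Rn n))) (g : Fin m → Rn n → ℝ≥0∞)
    (x : Rn n) : ℝ≥0∞ :=
  ⨆ (Q : Set (Rn n)) (_ : Q ∈ 𝒟) (_ : x ∈ Q),
    ∏ i, (volume Q ^ (-(1 - α / ((m : ℝ) * (n : ℝ)))) * ∫⁻ y in Q, g i y)

/-- The bilinear fractional maximal operator `ℳ_α(g₁,g₂)`. -/
def M2 (n : ℕ) (α : ℝ) (g₁ g₂ : Rn n → ℝ≥0∞) (x : Rn n) : ℝ≥0∞ :=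
  ⨆ (c : Rn n) (l : ℝ) (_ : 0 < l) (_ : x ∈ cube c l),
    (volume (cube c l) ^ (-(1 - α / (2 * (n : ℝ)))) * ∫⁻ y in cube c l, g₁ y) *
      (volume (cube c l) ^ (-(1 - α / (2 * (n : ℝ)))) * ∫⁻ y in cube c l, g₂ y)

/-- The bilinear dyadic fractional maximal operator `ℳ^𝒟_α(g₁,g₂)`. -/
def M2D (n : ℕ) (α : ℝ) (𝒟 : Set (Set (Rn n))) (g₁ g₂ : Rn n → ℝ≥0∞) (x : Rn n) : ℝ≥0∞ :=
  ⨆ (Q : Set (Rn n)) (_ : Q ∈ 𝒟) (_ : x ∈ Q),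
    (volume Q ^ (-(1 - α / (2 * (n : ℝ)))) * ∫⁻ y in Q, g₁ y) *
      (volume Q ^ (-(1 - α / (2 * (n : ℝ)))) * ∫⁻ y in Q, g₂ y)

/-- Sawyer's bilinear testing constant `[w⃗,v]_{S_{P⃗,q}}`. -/
def sawyer2 (n : ℕ) (α p₁ p₂ q : ℝ) (σ₁ σ₂ v : Rn n → ℝ≥0∞) : ℝ≥0∞ :=
  ⨆ (c : Rn n) (l : ℝ) (_ : 0 < l),
    (∫⁻ x in cube c l,
        M2 n α ((cube c l).indicator σ₁) ((cube c l).indicator σ₂) x ^ q * v x) ^ (1/q) /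
      (wtI σ₁ (cube c l) ^ (1/p₁) * wtI σ₂ (cube c l) ^ (1/p₂))

/-- Sawyer's multilinear testing constant. -/
def sawyerM (n m : ℕ) (α q : ℝ) (p : Fin m → ℝ) (σ : Fin m → Rn n → ℝ≥0∞)
    (v : Rn n → ℝ≥0∞) : ℝ≥0∞ :=
  ⨆ (c : Rn n) (l : ℝ) (_ : 0 < l),
    (∫⁻ x in cube c l, MM n m α (fun i => (cube c l).indicator (σ i)) x ^ q * v x) ^ (1/q) /
      ∏ i, wtI (σ i) (cube c l) ^ (1 / p i)

/-- The principal cubes of `f` relative to `σ` inside `Qbar`, generation by generation. -/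
def principalCubes {n : ℕ} (𝒟 : Set (Set (Rn n))) (σ f : Rn n → ℝ≥0∞)
    (Qbar : Set (Rn n)) : ℕ → Set (Set (Rn n))
  | 0 => {Qbar}
  | k + 1 => {G' | G' ∈ 𝒟 ∧ ∃ G ∈ principalCubes 𝒟 σ f Qbar k, G' ⊆ G ∧
      4 * avgE σ f G < avgE σ f G' ∧
      ∀ G'' ∈ 𝒟, G' ⊆ G'' → G'' ⊆ G → 4 * avgE σ f G < avgE σ f G'' → G'' = G'}

-- ### auxiliary lemmas

lemma cube_eq_pi {n : ℕ} (c : Rn n) (l : ℝ) :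
    cube c l = Set.pi Set.univ (fun i => Set.Ico (c i) (c i + l)) := by
  ext x; simp [cube, Set.mem_pi]

lemma measurableSet_cube {n : ℕ} (c : Rn n) (l : ℝ) : MeasurableSet (cube c l) := by
  rw [cube_eq_pi]; exact MeasurableSet.univ_pi fun i => measurableSet_Ico

lemma volume_cube {n : ℕ} (c : Rn n) (l : ℝ) :
    volume (cube c l) = ENNReal.ofReal l ^ n := by
  rw [cube_eq_pi, volume_pi_pi]
  simp [Real.volume_Ico]

lemma volume_cube_ne_zero {n : ℕ} (c : Rn n) {l : ℝ} (hl : 0 < l) :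
    volume (cube c l) ≠ 0 := by
  rw [volume_cube]
  exact pow_ne_zero _ (ENNReal.ofReal_pos.mpr hl).ne'

lemma volume_cube_ne_top {n : ℕ} (c : Rn n) (l : ℝ) : volume (cube c l) ≠ ∞ := by
  rw [volume_cube]
  exact ENNReal.pow_ne_top ENNReal.ofReal_ne_top

lemma rpow_ne_top' {x : ℝ≥0∞} (h0 : x ≠ 0) (ht : x ≠ ∞) (y : ℝ) : x ^ y ≠ ∞ := by
  simp [ENNReal.rpow_eq_top_iff, h0, ht]

lemma cube_subset_aux {n : ℕ} {c c' : Rn n} {l l' : ℝ} (hl : 0 < l)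
    (h : cube c l ⊆ cube c' l') (i : Fin n) :
    c' i ≤ c i ∧ c i + l ≤ c' i + l' := by
  have key : ∀ y : ℝ, c i ≤ y → y < c i + l → c' i ≤ y ∧ y < c' i + l' := by
    intro y h1 h2
    have hx : Function.update c i y ∈ cube c l := by
      intro j
      rcases eq_or_ne j i with rfl | hj
      · simpa using ⟨h1, h2⟩
      · simp only [Function.update_of_ne hj]
        exact ⟨le_refl _, by linarith⟩
    have h3 := h hx i
    simpa using h3
  constructor
  · exact (key (c i) le_rfl (by linarith)).1
  · by_contra hcon
    push_neg at hcon
    have h1 : c i ≤ max (c i) (c' i + l') := le_max_left _ _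
    have h2 : max (c i) (c' i + l') < c i + l := max_lt (by linarith) hcon
    exact absurd (key _ h1 h2).2 (not_lt.mpr (le_max_right _ _))

lemma M2_mono {n : ℕ} {α : ℝ} {g₁ g₂ g₁' g₂' : Rn n → ℝ≥0∞}
    (h1 : ∀ y, g₁ y ≤ g₁' y) (h2 : ∀ y, g₂ y ≤ g₂' y) (x : Rn n) :
    M2 n α g₁ g₂ x ≤ M2 n α g₁' g₂' x := by
  refine iSup_mono fun c => iSup_mono fun l => iSup_mono fun hl => iSup_mono fun hx => ?_
  exact mul_le_mul' (mul_le_mul' le_rfl (lintegral_mono h1))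
    (mul_le_mul' le_rfl (lintegral_mono h2))

lemma le_M2 {n : ℕ} {α : ℝ} (g₁ g₂ : Rn n → ℝ≥0∞) {c : Rn n} {l : ℝ} (hl : 0 < l)
    {x : Rn n} (hx : x ∈ cube c l) :
    (volume (cube c l) ^ (-(1 - α / (2 * (n : ℝ)))) * ∫⁻ y in cube c l, g₁ y) *
      (volume (cube c l) ^ (-(1 - α / (2 * (n : ℝ)))) * ∫⁻ y in cube c l, g₂ y)
      ≤ M2 n α g₁ g₂ x :=
  le_iSup_of_le c <| le_iSup_of_le l <| le_iSup_of_le hl <| le_iSup_of_le hx le_rfl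

lemma setLIntegral_indicator_self {n : ℕ} (σ : Rn n → ℝ≥0∞) {Q : Set (Rn n)}
    (hQ : MeasurableSet Q) : ∫⁻ y in Q, Q.indicator σ y = wtI σ Q := by
  rw [wtI]
  exact setLIntegral_congr_fun hQ (fun x hx =>
    Set.indicator_of_mem hx σ)

lemma keyA {n : ℕ} (hn : 0 < n) (α : ℝ) (σ₁ σ₂ : Rn n → ℝ≥0∞) {c : Rn n} {l : ℝ}
    (hl : 0 < l) {x : Rn n} (hx : x ∈ cube c l) :
    wtI σ₁ (cube c l) * wtI σ₂ (cube c l) * volume (cube c l) ^ (α / (n:ℝ) - 2)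
      ≤ M2 n α ((cube c l).indicator σ₁) ((cube c l).indicator σ₂) x := by
  have h := le_M2 (α := α) ((cube c l).indicator σ₁) ((cube c l).indicator σ₂) hl hx
  rw [setLIntegral_indicator_self σ₁ (measurableSet_cube c l),
      setLIntegral_indicator_self σ₂ (measurableSet_cube c l)] at h
  refine le_trans (le_of_eq ?_) h
  have hn' : (n:ℝ) ≠ 0 := Nat.cast_ne_zero.mpr hn.ne'
  have he : α / (n:ℝ) - 2 = (-(1 - α / (2 * (n:ℝ)))) + (-(1 - α / (2 * (n:ℝ)))) := by
    field_simp
    ring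
  rw [he, ENNReal.rpow_add _ _ (volume_cube_ne_zero c hl) (volume_cube_ne_top c l)]
  ring

lemma keyC {β : Type*} (s t : ℝ) (hs : 0 ≤ s) (ht : 1 ≤ t) (a b : β → ℝ≥0∞) :
    ∑' G, a G ^ s * b G ^ t ≤ (∑' G, a G) ^ s * (∑' G, b G) ^ t := by
  have ht0 : (0:ℝ) ≤ t - 1 := by linarith
  have hrw : ∀ x : ℝ≥0∞, x ^ t = x ^ (t - 1) * x := by
    intro x
    have h := ENNReal.rpow_add_of_nonneg (x := x) (t-1) 1 ht0 zero_le_one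
    rw [ENNReal.rpow_one, sub_add_cancel] at h
    exact h
  calc ∑' G, a G ^ s * b G ^ t
      ≤ ∑' G, (∑' G', a G') ^ s * ((∑' G', b G') ^ (t - 1) * b G) := by
        refine ENNReal.tsum_le_tsum fun G => ?_
        rw [hrw (b G)]
        exact mul_le_mul' (ENNReal.rpow_le_rpow (ENNReal.le_tsum G) hs)
          (mul_le_mul' (ENNReal.rpow_le_rpow (ENNReal.le_tsum G) ht0) le_rfl)
    _ = (∑' G, a G) ^ s * ((∑' G, b G) ^ (t - 1) * ∑' G, b G) := by
        rw [ENNReal.tsum_mul_left, ENNReal.tsum_mul_left]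
    _ = (∑' G, a G) ^ s * (∑' G, b G) ^ t := by rw [← hrw]

lemma M2_indicator_zero {n : ℕ} {α : ℝ} {σ₁ σ₂ : Rn n → ℝ≥0∞} {G : Set (Rn n)}
    (hG : MeasurableSet G) (h0 : wtI σ₁ G = 0 ∨ wtI σ₂ G = 0) (x : Rn n) :
    M2 n α (G.indicator σ₁) (G.indicator σ₂) x = 0 := by
  refine le_antisymm ?_ (zero_le)
  simp only [M2]
  refine iSup_le fun c' => iSup_le fun l' => iSup_le fun hl' => iSup_le fun hx' => ?_
  rcases h0 with h0 | h0
  · have hz : ∫⁻ y in cube c' l', G.indicator σ₁ y = 0 := by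
      refine le_antisymm ?_ (zero_le)
      calc ∫⁻ y in cube c' l', G.indicator σ₁ y ≤ ∫⁻ y, G.indicator σ₁ y :=
            setLIntegral_le_lintegral _ _
        _ = ∫⁻ y in G, σ₁ y := lintegral_indicator hG σ₁
        _ = 0 := h0
    rw [hz, mul_zero, zero_mul]
  · have hz : ∫⁻ y in cube c' l', G.indicator σ₂ y = 0 := by
      refine le_antisymm ?_ (zero_le)
      calc ∫⁻ y in cube c' l', G.indicator σ₂ y ≤ ∫⁻ y, G.indicator σ₂ y :=
            setLIntegral_le_lintegral _ _
        _ = ∫⁻ y in G, σ₂ y := lintegral_indicator hG σ₂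
        _ = 0 := h0
    rw [hz, mul_zero, mul_zero]

lemma keyB {n : ℕ} (α p₁ p₂ q : ℝ) (hp₁ : 0 < p₁) (hp₂ : 0 < p₂) (hq : 0 < q)
    (σ₁ σ₂ v : Rn n → ℝ≥0∞)
    (hfin₁ : ∀ (c : Rn n) (l : ℝ), wtI σ₁ (cube c l) ≠ ∞)
    (hfin₂ : ∀ (c : Rn n) (l : ℝ), wtI σ₂ (cube c l) ≠ ∞)
    (c : Rn n) {l : ℝ} (hl : 0 < l) :
    (∫⁻ x in cube c l,
        M2 n α ((cube c l).indicator σ₁) ((cube c l).indicator σ₂) x ^ q * v x)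
      ≤ sawyer2 n α p₁ p₂ q σ₁ σ₂ v ^ q *
        wtI σ₁ (cube c l) ^ (q/p₁) * wtI σ₂ (cube c l) ^ (q/p₂) := by
  by_cases h0 : wtI σ₁ (cube c l) = 0 ∨ wtI σ₂ (cube c l) = 0
  · have hz : (∫⁻ x in cube c l,
        M2 n α ((cube c l).indicator σ₁) ((cube c l).indicator σ₂) x ^ q * v x) = 0 := by
      have : ∀ x : Rn n,
          M2 n α ((cube c l).indicator σ₁) ((cube c l).indicator σ₂) x ^ q * v x = 0 := by
        intro x
        rw [M2_indicator_zero (measurableSet_cube c l) h0 x,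
          ENNReal.zero_rpow_of_pos hq, zero_mul]
      simp [this]
    rw [hz]
    exact zero_le
  push_neg at h0
  set A := ∫⁻ x in cube c l,
      M2 n α ((cube c l).indicator σ₁) ((cube c l).indicator σ₂) x ^ q * v x with hA
  set B := wtI σ₁ (cube c l) ^ (1/p₁) * wtI σ₂ (cube c l) ^ (1/p₂) with hB
  have hS : A ^ (1/q) / B ≤ sawyer2 n α p₁ p₂ q σ₁ σ₂ v :=
    le_iSup_of_le c <| le_iSup_of_le l <| le_iSup_of_le hl le_rfl
  have hB0 : B ≠ 0 := by
    apply mul_ne_zero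
    · exact (ENNReal.rpow_pos (pos_iff_ne_zero.mpr h0.1) (hfin₁ c l)).ne'
    · exact (ENNReal.rpow_pos (pos_iff_ne_zero.mpr h0.2) (hfin₂ c l)).ne'
  have hBt : B ≠ ∞ :=
    ENNReal.mul_ne_top (ENNReal.rpow_ne_top_of_nonneg (by positivity) (hfin₁ c l))
      (ENNReal.rpow_ne_top_of_nonneg (by positivity) (hfin₂ c l))
  have h1 : A ^ (1/q) ≤ sawyer2 n α p₁ p₂ q σ₁ σ₂ v * B := (ENNReal.div_le_iff hB0 hBt).mp hS
  calc A = (A ^ (1/q)) ^ q := by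
        rw [← ENNReal.rpow_mul, one_div_mul_cancel hq.ne', ENNReal.rpow_one]
    _ ≤ (sawyer2 n α p₁ p₂ q σ₁ σ₂ v * B) ^ q := ENNReal.rpow_le_rpow h1 hq.le
    _ = sawyer2 n α p₁ p₂ q σ₁ σ₂ v ^ q * B ^ q := ENNReal.mul_rpow_of_nonneg _ _ hq.le
    _ = sawyer2 n α p₁ p₂ q σ₁ σ₂ v ^ q *
        wtI σ₁ (cube c l) ^ (q/p₁) * wtI σ₂ (cube c l) ^ (q/p₂) := by
        rw [hB, ENNReal.mul_rpow_of_nonneg _ _ hq.le, ← ENNReal.rpow_mul,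
          ← ENNReal.rpow_mul, one_div_mul_eq_div, one_div_mul_eq_div, mul_assoc]

lemma exists_maximal_cube {n : ℕ} (hn : 0 < n) {𝒟 : Set (Set (Rn n))}
    (h𝒟 : IsDyadicGrid 𝒟) {𝒞 : Set (Set (Rn n))} (h𝒞 : 𝒞 ⊆ 𝒟) {R : Set (Rn n)}
    {cR : Rn n} {kR : ℤ} (hR : R = cube cR ((2:ℝ)^kR)) (hsub : ∀ G ∈ 𝒞, G ⊆ R)
    {A : Set (Rn n)} (hA : A ∈ 𝒞) :
    ∃ G ∈ 𝒞, A ⊆ G ∧ ∀ G' ∈ 𝒞, G ⊆ G' → G' = G := by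
  have i0 : Fin n := ⟨0, hn⟩
  set P : ℤ → Prop := fun k => ∃ G ∈ 𝒞, A ⊆ G ∧ ∃ c, G = cube c ((2:ℝ)^k) with hP
  have hbdd : ∀ k, P k → k ≤ kR := by
    rintro k ⟨G, hG𝒞, -, c, rfl⟩
    have hsubR : cube c ((2:ℝ)^k) ⊆ R := hsub _ hG𝒞
    rw [hR] at hsubR
    have h2 := cube_subset_aux (zpow_pos two_pos k) hsubR i0
    have h3 : (2:ℝ)^k ≤ (2:ℝ)^kR := by linarith [h2.1, h2.2]
    exact (zpow_le_zpow_iff_right₀ (by norm_num : (1:ℝ) < 2)).mp h3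
  have hinh : ∃ k, P k := by
    obtain ⟨c, k, hc⟩ := h𝒟.1 A (h𝒞 hA)
    exact ⟨k, A, hA, subset_rfl, c, hc⟩
  obtain ⟨km, hkm, hmax⟩ := Int.exists_greatest_of_bdd ⟨kR, hbdd⟩ hinh
  obtain ⟨G, hG𝒞, hAG, cG, rfl⟩ := hkm
  refine ⟨_, hG𝒞, hAG, ?_⟩
  rintro G' hG'𝒞 hGG'
  obtain ⟨c', k', rfl⟩ := h𝒟.1 G' (h𝒞 hG'𝒞)
  have hk' : k' ≤ km := hmax k' ⟨_, hG'𝒞, hAG.trans hGG', c', rfl⟩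
  have hside' : (2:ℝ)^k' ≤ (2:ℝ)^km := (zpow_le_zpow_iff_right₀ (by norm_num : (1:ℝ) < 2)).mpr hk'
  have haux := fun i => cube_subset_aux (zpow_pos two_pos km) hGG' i
  have hside : (2:ℝ)^km ≤ (2:ℝ)^k' := by linarith [(haux i0).1, (haux i0).2]
  have hseq : (2:ℝ)^k' = (2:ℝ)^km := le_antisymm hside' hside
  have hceq : c' = cG := by
    funext i
    have h1 := (haux i).1
    have h2 := (haux i).2
    rw [hseq] at h2
    linarith
  rw [hseq, hceq]

/-- weak-type estimate for the level-set measure `γ` in the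
testing argument of Lemma 3.1. -/
theorem stmt10 (n : ℕ) (hn : 0 < n) (α p₁ p₂ p q : ℝ)
    (hα0 : 0 ≤ α) (hα : α < 2 * n) (hp₁ : 1 < p₁) (hp₂ : 1 < p₂)
    (hp : 1/p = 1/p₁ + 1/p₂) (hq : 1/q = 1/p - α/n) (hqp₂ : p₂ ≤ q) :
    ∃ C : ℝ≥0∞, C ≠ ∞ ∧
      ∀ (w₁ w₂ v σ₁ σ₂ : Rn n → ℝ≥0∞),
        Measurable w₁ → Measurable w₂ → Measurable v →
        σ₁ = (fun x => w₁ x ^ (1 - p₁/(p₁-1))) →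
        σ₂ = (fun x => w₂ x ^ (1 - p₂/(p₂-1))) →
        (∀ (c : Rn n) (l : ℝ), wtI σ₁ (cube c l) ≠ ∞) →
        (∀ (c : Rn n) (l : ℝ), wtI σ₂ (cube c l) ≠ ∞) →
        (∀ (c : Rn n) (l : ℝ), wtI v (cube c l) ≠ ∞) →
        ∀ (𝒟 : Set (Set (Rn n))), IsDyadicGrid 𝒟 →
        ∀ R ∈ 𝒟, ∀ f : Rn n → ℝ≥0∞, Measurable f → (∀ x ∉ R, f x = 0) →
        ∀ (ι : Type) (_ : Countable ι) (Q E : ι → Set (Rn n)),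
          (∀ i, Q i ∈ 𝒟) → (∀ i, Q i ⊆ R) → (∀ i, E i ⊆ Q i) →
          (∀ i, MeasurableSet (E i)) →
          (Pairwise fun i j => Disjoint (E i) (E j)) →
          ∀ lam : ℝ≥0∞, 0 < lam →
            ∑' i : {i : ι // lam < avgE σ₂ f (Q i)},
                (wtI σ₁ (Q i.1) * wtI σ₂ (Q i.1) * volume (Q i.1) ^ (α/(n:ℝ) - 2)) ^ q *
                  wtI v (E i.1)
              ≤ C * sawyer2 n α p₁ p₂ q σ₁ σ₂ v ^ q * wtI σ₁ R ^ (q/p₁) *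
                  (lam⁻¹ * ∫⁻ x, f x * σ₂ x) ^ (q/p₂) := by
  refine ⟨1, ENNReal.one_ne_top, ?_⟩
  intro w₁ w₂ v σ₁ σ₂ hw₁ hw₂ hv hσ₁def hσ₂def hfin₁ hfin₂ hfinv 𝒟 h𝒟 R hR f hf hfz
    ι hι Q E hQ𝒟 hQR hEQ hEmeas hEdisj lam hlam
  haveI : Countable ι := hι
  have hq0 : (0:ℝ) < q := by linarith
  have hp₁0 : (0:ℝ) < p₁ := by linarith
  have hp₂0 : (0:ℝ) < p₂ := by linarith
  have hs0 : (0:ℝ) ≤ q / p₁ := by positivity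
  have ht1 : (1:ℝ) ≤ q / p₂ := (one_le_div hp₂0).mpr hqp₂
  rcases eq_or_ne lam ∞ with rfl | hlamt
  · haveI : IsEmpty {i : ι // ⊤ < avgE σ₂ f (Q i)} := ⟨fun i => not_top_lt i.2⟩
    rw [tsum_empty]
    exact zero_le
  obtain ⟨cR, kR, hRrep⟩ := h𝒟.1 R hR
  set S := {i : ι // lam < avgE σ₂ f (Q i)} with hs_def
  set T : S → ℝ≥0∞ := fun i =>
    (wtI σ₁ (Q i.1) * wtI σ₂ (Q i.1) * volume (Q i.1) ^ (α/(n:ℝ) - 2)) ^ q *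
      wtI v (E i.1) with hT
  set 𝒞 : Set (Set (Rn n)) := Set.range (fun i : S => Q i.1) with h𝒞def
  have h𝒞𝒟 : 𝒞 ⊆ 𝒟 := by rintro G ⟨i, rfl⟩; exact hQ𝒟 i.1
  have h𝒞R : ∀ G ∈ 𝒞, G ⊆ R := by rintro G ⟨i, rfl⟩; exact hQR i.1
  set M : Set (Set (Rn n)) := {G | G ∈ 𝒞 ∧ ∀ G' ∈ 𝒞, G ⊆ G' → G' = G} with hMdef
  have hmaxex : ∀ i : S, ∃ G, G ∈ M ∧ Q i.1 ⊆ G := by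
    intro i
    obtain ⟨G, hG𝒞, hsub, hmax⟩ :=
      exists_maximal_cube hn h𝒟 h𝒞𝒟 hRrep h𝒞R (Set.mem_range_self i)
    exact ⟨G, ⟨hG𝒞, hmax⟩, hsub⟩
  choose g hgM hgsub using hmaxex
  have hMc : M.Countable := (Set.countable_range _).mono (fun G hG => hG.1)
  haveI : Countable ↥M := hMc.to_subtype
  set g' : S → ↥M := fun i => ⟨g i, hgM i⟩ with hg'def
  -- measurability and basic facts about members of M
  have hMmem : ∀ G : ↥M, G.1 ∈ 𝒟 := fun G => h𝒞𝒟 G.2.1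
  have hMmeas : ∀ G : ↥M, MeasurableSet G.1 := by
    intro G
    obtain ⟨c, k, hc⟩ := h𝒟.1 G.1 (hMmem G)
    rw [hc]; exact measurableSet_cube _ _
  have hMsubR : ∀ G : ↥M, G.1 ⊆ R := fun G => h𝒞R G.1 G.2.1
  have hMdisj : Pairwise (Function.onFun Disjoint (fun G : ↥M => G.1)) := by
    intro G G' hne
    rcases h𝒟.2.1 G.1 (hMmem G) G'.1 (hMmem G') with h | h | h
    · exact absurd (Subtype.ext (G.2.2 G'.1 G'.2.1 (Set.inter_eq_left.mp h))) hne.symm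
    · exact absurd (Subtype.ext ((G'.2.2 G.1 G.2.1 (Set.inter_eq_right.mp h)).symm)) hne.symm
    · exact Set.disjoint_iff_inter_eq_empty.mpr h
  -- the splitting of the sum along fibers of g'
  have hsplit : ∑' i : S, T i = ∑' (G : ↥M), ∑' (i : {j : S // g' j = G}), T i.1 := by
    rw [← (Equiv.sigmaFiberEquiv g').tsum_eq T]
    exact ENNReal.tsum_sigma' _
  -- bound for each fiber
  have hGbound : ∀ G : ↥M, (∑' (i : {j : S // g' j = G}), T i.1)
      ≤ sawyer2 n α p₁ p₂ q σ₁ σ₂ v ^ q * wtI σ₁ G.1 ^ (q/p₁) * wtI σ₂ G.1 ^ (q/p₂) := by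
    intro G
    obtain ⟨cG, kG, hGrep⟩ := h𝒟.1 G.1 (hMmem G)
    have step1 : ∀ i : {j : S // g' j = G},
        T i.1 ≤ ∫⁻ x in E i.1.1, M2 n α (G.1.indicator σ₁) (G.1.indicator σ₂) x ^ q * v x := by
      intro i
      have hQsubG : Q i.1.1 ⊆ G.1 := by
        have : g i.1 = G.1 := congrArg Subtype.val i.2
        rw [← this]; exact hgsub i.1
      obtain ⟨cq, kq, hqrep⟩ := h𝒟.1 (Q i.1.1) (hQ𝒟 i.1.1)
      set A := wtI σ₁ (Q i.1.1) * wtI σ₂ (Q i.1.1) * volume (Q i.1.1) ^ (α/(n:ℝ) - 2) with hAdef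
      have hA : A ≠ ∞ := by
        rw [hAdef, hqrep]
        exact ENNReal.mul_ne_top (ENNReal.mul_ne_top (hfin₁ _ _) (hfin₂ _ _))
          (rpow_ne_top' (volume_cube_ne_zero _ (zpow_pos two_pos kq))
            (volume_cube_ne_top _ _) _)
      have hAq : A ^ q ≠ ∞ := ENNReal.rpow_ne_top_of_nonneg hq0.le hA
      have hconst : T i.1 = ∫⁻ x in E i.1.1, A ^ q * v x := by
        rw [hT, lintegral_const_mul' _ _ hAq]
        rfl
      rw [hconst]
      refine setLIntegral_mono' (hEmeas _) fun x hx => ?_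
      have hxQ : x ∈ Q i.1.1 := hEQ _ hx
      have h1 : A ≤ M2 n α ((Q i.1.1).indicator σ₁) ((Q i.1.1).indicator σ₂) x := by
        rw [hAdef, hqrep]
        rw [hqrep] at hxQ
        exact keyA hn α σ₁ σ₂ (zpow_pos two_pos kq) hxQ
      have h2 : M2 n α ((Q i.1.1).indicator σ₁) ((Q i.1.1).indicator σ₂) x
          ≤ M2 n α (G.1.indicator σ₁) (G.1.indicator σ₂) x :=
        M2_mono (fun y => Set.indicator_le_indicator_of_subset hQsubG (fun _ => zero_le) y)
          (fun y => Set.indicator_le_indicator_of_subset hQsubG (fun _ => zero_le) y) x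
      exact mul_le_mul' (ENNReal.rpow_le_rpow (h1.trans h2) hq0.le) le_rfl
    have hdisj2 : Pairwise (Function.onFun Disjoint (fun i : {j : S // g' j = G} => E i.1.1)) := by
      intro i j hij
      refine hEdisj fun hcon => hij ?_
      exact Subtype.ext (Subtype.ext hcon)
    have step2 : (∑' (i : {j : S // g' j = G}),
          ∫⁻ x in E i.1.1, M2 n α (G.1.indicator σ₁) (G.1.indicator σ₂) x ^ q * v x)
        ≤ ∫⁻ x in G.1, M2 n α (G.1.indicator σ₁) (G.1.indicator σ₂) x ^ q * v x := by
      rw [← lintegral_iUnion (fun i => hEmeas _) hdisj2]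
      refine lintegral_mono_set (Set.iUnion_subset fun i => ?_)
      refine (hEQ i.1.1).trans ?_
      have : g i.1 = G.1 := congrArg Subtype.val i.2
      rw [← this]; exact hgsub i.1
    have step3 : (∫⁻ x in G.1, M2 n α (G.1.indicator σ₁) (G.1.indicator σ₂) x ^ q * v x)
        ≤ sawyer2 n α p₁ p₂ q σ₁ σ₂ v ^ q * wtI σ₁ G.1 ^ (q/p₁) * wtI σ₂ G.1 ^ (q/p₂) := by
      rw [hGrep]
      exact keyB α p₁ p₂ q hp₁0 hp₂0 hq0 σ₁ σ₂ v hfin₁ hfin₂ cG (zpow_pos two_pos kG)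
    exact ((ENNReal.tsum_le_tsum step1).trans step2).trans step3
  -- sums of σ₁ and σ₂ over the maximal cubes
  have hsum1 : ∑' G : ↥M, wtI σ₁ G.1 ≤ wtI σ₁ R := by
    have h1 : ∑' G : ↥M, wtI σ₁ G.1 = ∫⁻ x in ⋃ G : ↥M, G.1, σ₁ x :=
      (lintegral_iUnion hMmeas hMdisj σ₁).symm
    rw [h1, wtI]
    exact lintegral_mono_set (Set.iUnion_subset hMsubR)
  have hsum2 : ∑' G : ↥M, wtI σ₂ G.1 ≤ lam⁻¹ * ∫⁻ x, f x * σ₂ x := by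
    have hper : ∀ G : ↥M, wtI σ₂ G.1 ≤ lam⁻¹ * ∫⁻ x in G.1, f x * σ₂ x := by
      intro G
      obtain ⟨i₀, hi₀⟩ := G.2.1
      have havg : lam < avgE σ₂ f G.1 := by rw [← hi₀]; exact i₀.2
      rcases eq_or_ne (wtI σ₂ G.1) 0 with h0 | h0
      · rw [h0]; exact zero_le
      have hfinG : wtI σ₂ G.1 ≠ ∞ := by
        obtain ⟨c, k, hc⟩ := h𝒟.1 G.1 (hMmem G)
        rw [hc]; exact hfin₂ _ _
      have hle : lam * wtI σ₂ G.1 ≤ ∫⁻ x in G.1, f x * σ₂ x := by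
        have h1 : lam ≤ (∫⁻ x in G.1, f x * σ₂ x) / wtI σ₂ G.1 := by
          rw [ENNReal.div_eq_inv_mul]
          exact havg.le
        exact (ENNReal.le_div_iff_mul_le (Or.inl h0) (Or.inl hfinG)).mp h1
      calc wtI σ₂ G.1 = lam⁻¹ * (lam * wtI σ₂ G.1) := by
            rw [← mul_assoc, ENNReal.inv_mul_cancel hlam.ne' hlamt, one_mul]
        _ ≤ lam⁻¹ * ∫⁻ x in G.1, f x * σ₂ x := mul_le_mul' le_rfl hle
    calc ∑' G : ↥M, wtI σ₂ G.1 ≤ ∑' G : ↥M, lam⁻¹ * ∫⁻ x in G.1, f x * σ₂ x :=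
          ENNReal.tsum_le_tsum hper
      _ = lam⁻¹ * ∑' G : ↥M, ∫⁻ x in G.1, f x * σ₂ x := ENNReal.tsum_mul_left
      _ = lam⁻¹ * ∫⁻ x in ⋃ G : ↥M, G.1, f x * σ₂ x := by
          rw [lintegral_iUnion hMmeas hMdisj]
      _ ≤ lam⁻¹ * ∫⁻ x, f x * σ₂ x :=
          mul_le_mul' le_rfl (setLIntegral_le_lintegral _ _)
  -- put everything together
  calc ∑' i : S, T i = ∑' (G : ↥M), ∑' (i : {j : S // g' j = G}), T i.1 := hsplit
    _ ≤ ∑' (G : ↥M), sawyer2 n α p₁ p₂ q σ₁ σ₂ v ^ q * wtI σ₁ G.1 ^ (q/p₁) *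
          wtI σ₂ G.1 ^ (q/p₂) := ENNReal.tsum_le_tsum hGbound
    _ = sawyer2 n α p₁ p₂ q σ₁ σ₂ v ^ q *
          ∑' (G : ↥M), wtI σ₁ G.1 ^ (q/p₁) * wtI σ₂ G.1 ^ (q/p₂) := by
        rw [← ENNReal.tsum_mul_left]
        exact tsum_congr fun G => by ring
    _ ≤ sawyer2 n α p₁ p₂ q σ₁ σ₂ v ^ q *
          ((∑' G : ↥M, wtI σ₁ G.1) ^ (q/p₁) * (∑' G : ↥M, wtI σ₂ G.1) ^ (q/p₂)) :=
        mul_le_mul' le_rfl (keyC _ _ hs0 ht1 _ _)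
    _ ≤ sawyer2 n α p₁ p₂ q σ₁ σ₂ v ^ q *
          (wtI σ₁ R ^ (q/p₁) * (lam⁻¹ * ∫⁻ x, f x * σ₂ x) ^ (q/p₂)) :=
        mul_le_mul' le_rfl (mul_le_mul' (ENNReal.rpow_le_rpow hsum1 hs0)
          (ENNReal.rpow_le_rpow hsum2 (by positivity)))
    _ = 1 * sawyer2 n α p₁ p₂ q σ₁ σ₂ v ^ q * wtI σ₁ R ^ (q/p₁) *
          (lam⁻¹ * ∫⁻ x, f x * σ₂ x) ^ (q/p₂) := by ring
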